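/- The ∇-weighted number of maximal chains in the weak order on S_n equals N!: that is, m_∇(ε, w₀) = N!, i.e., the sum over all reduced words w₀ = s_{a_1} s_{a_2} ⋯ s_{a_N} of the products a_1 a_2 ⋯ a_N equals N!. -/

import Mathlib

open Equiv Finset MvPolynomial

/-- The length (number of inversions) of a permutation `w`:
`ℓ(w) = #{(a,b) : a < b, w(a) > w(b)}`. -/
def permLen {n : ℕ} (w : Equiv.Perm (Fin n)) : ℕ :=
  (Finset.univ.filter fun p : Fin n × Fin n => p.1 < p.2 ∧ w p.2 < w p.1).card

/-- The longest element `w₀` of the symmetric group, `w₀(a) = n + 1 - a` (one-based). -/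
def longest (n : ℕ) : Equiv.Perm (Fin n) := Fin.revPerm

/-- The element `i` of `Fin n`, for `i : Fin (n-1)`. -/
def fa {n : ℕ} (i : Fin (n - 1)) : Fin n := ⟨(i : ℕ), by have := i.isLt; omega⟩

/-- The element `i + 1` of `Fin n`, for `i : Fin (n-1)`. -/
def fb {n : ℕ} (i : Fin (n - 1)) : Fin n := ⟨(i : ℕ) + 1, by have := i.isLt; omega⟩

/-- The simple transposition `sᵢ` exchanging positions `i` and `i+1`
(zero-based; it is `s_{i+1}` in the one-based indexing of the paper). -/
def sgen {n : ℕ} (i : Fin (n - 1)) : Equiv.Perm (Fin n) := Equiv.swap (fa i) (fb i)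

/-- The Lehmer code of `w`: `code(w)ᵢ = #{j > i : w(j) < w(i)}`. -/
def permCode {n : ℕ} (w : Equiv.Perm (Fin n)) (i : Fin n) : ℕ :=
  (Finset.univ.filter fun j => i < j ∧ w j < w i).card

/-- The Manhattan distance between the Lehmer codes of `u` and `v`;
for a strong Bruhat cover `w ⋖ wt` this is the code weight `c(w, wt)`. -/
def codeDist {n : ℕ} (u v : Equiv.Perm (Fin n)) : ℕ :=
  ∑ i : Fin n, Nat.dist (permCode u i) (permCode v i)

/-- The weighted adjacency matrix of the weak order: entry `(u, v)` is the ∇-weight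
(the one-based index `i`) if `v = u sᵢ` is a weak-order cover of `u`, and `0` otherwise. -/
def nablaMat (n : ℕ) : Matrix (Equiv.Perm (Fin n)) (Equiv.Perm (Fin n)) ℕ :=
  Matrix.of fun u v =>
    ∑ i : Fin (n - 1), if v = u * sgen i ∧ permLen v = permLen u + 1 then (i : ℕ) + 1 else 0

/-- `mNabla n u v` is the ∇-weighted number of saturated weak-order chains from `u` to `v`:
the `(u, v)` entry of the `(ℓ(v) - ℓ(u))`-th power of the weighted weak-order adjacency
matrix.  (Since every cover raises length by exactly one, walks of length `ℓ(v) - ℓ(u)`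
from `u` to `v` are exactly the saturated chains.) -/
def mNabla (n : ℕ) (u v : Equiv.Perm (Fin n)) : ℕ :=
  (nablaMat n ^ (permLen v - permLen u)) u v

/-- The weighted adjacency matrix of the strong Bruhat order with the code weights:
entry `(u, v)` is `c(u, v)` if `v = u t` is a strong cover of `u` (`t` a transposition),
and `0` otherwise. -/
def deltaMat (n : ℕ) : Matrix (Equiv.Perm (Fin n)) (Equiv.Perm (Fin n)) ℕ :=
  Matrix.of fun u v =>
    if (∃ p : Fin n × Fin n, p.1 < p.2 ∧ v = u * Equiv.swap p.1 p.2) ∧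
        permLen v = permLen u + 1
    then codeDist u v else 0

/-- `mDelta n u v` is the code-weighted number of saturated strong-order chains
from `u` to `v`. -/
def mDelta (n : ℕ) (u v : Equiv.Perm (Fin n)) : ℕ :=
  (deltaMat n ^ (permLen v - permLen u)) u v

/-- The weighted adjacency matrix of the strong Bruhat order with the Chevalley weights:
entry `(u, v)` is `j - i` if `v = u t_{ij}` (`i < j`) is a strong cover of `u`,
and `0` otherwise. -/
def chevMat (n : ℕ) : Matrix (Equiv.Perm (Fin n)) (Equiv.Perm (Fin n)) ℕ :=
  Matrix.of fun u v =>
    ∑ p : Fin n × Fin n,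
      if p.1 < p.2 ∧ v = u * Equiv.swap p.1 p.2 ∧ permLen v = permLen u + 1
      then (p.2 : ℕ) - (p.1 : ℕ) else 0

/-- `mChev n u v` is the Chevalley-weighted number of saturated strong-order chains
from `u` to `v`. -/
def mChev (n : ℕ) (u v : Equiv.Perm (Fin n)) : ℕ :=
  (chevMat n ^ (permLen v - permLen u)) u v

namespace NablaProof

variable {n : ℕ}

lemma sgen_val (i : Fin (n-1)) (x : Fin n) :
    ((sgen i x : Fin n) : ℕ) = if (x:ℕ) = (i:ℕ) then (i:ℕ)+1 else if (x:ℕ) = (i:ℕ)+1 then (i:ℕ) else (x:ℕ) := by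
  rcases eq_or_ne x (fa i) with rfl | hxa
  · simp [sgen, Equiv.swap_apply_left, fa, fb]
  · rcases eq_or_ne x (fb i) with rfl | hxb
    · have : ¬ ((fb i : ℕ) = (i:ℕ)) := by simp [fb]
      simp [sgen, Equiv.swap_apply_right, fa, fb]
    · have h1 : ¬ ((x:ℕ) = (i:ℕ)) := fun h => hxa (Fin.ext (by simpa [fa] using h))
      have h2 : ¬ ((x:ℕ) = (i:ℕ)+1) := fun h => hxb (Fin.ext (by simpa [fb] using h))
      simp [sgen, Equiv.swap_apply_of_ne_of_ne hxa hxb, h1, h2]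

lemma sgen_key (i : Fin (n-1)) (p : Fin n × Fin n) (h1 : p.1 < p.2)
    (h2 : p ≠ (fa i, fb i)) : sgen i p.1 < sgen i p.2 := by
  have hne : ¬ ((p.1 : ℕ) = (i:ℕ) ∧ (p.2 : ℕ) = (i:ℕ)+1) := by
    rintro ⟨e1, e2⟩
    exact h2 (Prod.ext (Fin.ext (by simpa [fa] using e1)) (Fin.ext (by simpa [fb] using e2)))
  have hp : (p.1 : ℕ) < (p.2 : ℕ) := h1
  have v1 := sgen_val i p.1
  have v2 := sgen_val i p.2
  rw [Fin.lt_def, v1, v2]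
  split_ifs <;> omega

lemma sgen_mul_self (i : Fin (n-1)) : sgen i * sgen i = 1 := by
  simp [sgen, Equiv.swap_mul_self]

lemma permLen_ascend (w : Perm (Fin n)) (i : Fin (n-1)) (h : w (fa i) < w (fb i)) :
    permLen (w * sgen i) = permLen w + 1 := by
  classical
  set s := sgen i with hs
  set q : Fin n × Fin n := (fa i, fb i) with hq
  set I₀ := (Finset.univ.filter fun p : Fin n × Fin n => p.1 < p.2 ∧ w p.2 < w p.1) with hI0
  set I₁ := (Finset.univ.filter fun p : Fin n × Fin n => p.1 < p.2 ∧ (w * s) p.2 < (w * s) p.1) with hI1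
  have hfa : s (fa i) = fb i := by simp [hs, sgen, Equiv.swap_apply_left]
  have hfb : s (fb i) = fa i := by simp [hs, sgen, Equiv.swap_apply_right]
  have hss : ∀ x, s (s x) = x := fun x => by simp [hs, sgen, Equiv.swap_apply_self]
  have hfafb : fa i < fb i := by simp [Fin.lt_def, fa, fb]
  have hq1 : q ∈ I₁ := by
    simp only [hI1, Finset.mem_filter, Finset.mem_univ, true_and]
    refine ⟨hfafb, ?_⟩
    simpa [Equiv.Perm.mul_apply, hq, hfa, hfb] using h
  have hq0 : q ∉ I₀ := by
    simp only [hI0, Finset.mem_filter, Finset.mem_univ, true_and]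
    rintro ⟨-, h2⟩
    exact absurd h (not_lt.2 h2.le)
  have hset : I₁ = insert q (I₀.image fun p => (s p.1, s p.2)) := by
    ext p
    simp only [Finset.mem_insert, Finset.mem_image, hI0, hI1, Finset.mem_filter,
      Finset.mem_univ, true_and]
    constructor
    · rintro ⟨hlt, hinv⟩
      rcases eq_or_ne p q with rfl | hpq
      · exact Or.inl rfl
      · refine Or.inr ⟨(s p.1, s p.2), ⟨sgen_key i p hlt hpq, ?_⟩, ?_⟩
        · simpa [Equiv.Perm.mul_apply] using hinv
        · simp [hss]
    · rintro (rfl | ⟨r, ⟨hlt, hinv⟩, rfl⟩)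
      · exact (Finset.mem_filter.1 hq1).2
      · have hrq : r ≠ q := by
          rintro rfl
          exact hq0 (by
            simp only [hI0, Finset.mem_filter, Finset.mem_univ, true_and]
            exact ⟨hlt, hinv⟩)
        refine ⟨sgen_key i r hlt hrq, ?_⟩
        simpa [Equiv.Perm.mul_apply, hss] using hinv
  have hqim : q ∉ I₀.image fun p => (s p.1, s p.2) := by
    simp only [Finset.mem_image, not_exists]
    rintro r ⟨hr, he⟩
    have h1 : s r.1 = fa i := congrArg Prod.fst he
    have h2 : s r.2 = fb i := congrArg Prod.snd he
    have e1 : r.1 = fb i := by rw [← hss r.1, h1, hfa]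
    have e2 : r.2 = fa i := by rw [← hss r.2, h2, hfb]
    simp only [hI0, Finset.mem_filter] at hr
    have hlt := hr.2.1
    rw [e1, e2] at hlt
    exact absurd hlt (not_lt.2 hfafb.le)
  have hinj : Function.Injective fun p : Fin n × Fin n => (s p.1, s p.2) := by
    rintro ⟨a, b⟩ ⟨c, d⟩ he
    have h1 : s a = s c := congrArg Prod.fst he
    have h2 : s b = s d := congrArg Prod.snd he
    have : a = c := by rw [← hss a, h1, hss]
    have : b = d := by rw [← hss b, h2, hss]
    simp_all
  calc permLen (w * s) = I₁.card := rfl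
    _ = (I₀.image fun p => (s p.1, s p.2)).card + 1 := by
        rw [hset, Finset.card_insert_of_notMem hqim]
    _ = permLen w + 1 := by rw [Finset.card_image_of_injective _ hinj]; rfl

lemma fa_ne_fb (i : Fin (n-1)) : fa i ≠ fb i := by
  intro h; have := congrArg Fin.val h; simp [fa, fb] at this

lemma permLen_descend (w : Perm (Fin n)) (i : Fin (n-1)) (h : w (fb i) < w (fa i)) :
    permLen w = permLen (w * sgen i) + 1 := by
  have hfa : (w * sgen i) (fa i) = w (fb i) := by
    simp [Equiv.Perm.mul_apply, sgen, Equiv.swap_apply_left]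
  have hfb : (w * sgen i) (fb i) = w (fa i) := by
    simp [Equiv.Perm.mul_apply, sgen, Equiv.swap_apply_right]
  have := permLen_ascend (w * sgen i) i (by rw [hfa, hfb]; exact h)
  rwa [mul_assoc, sgen_mul_self, mul_one] at this

lemma permLen_dichotomy (w : Perm (Fin n)) (i : Fin (n-1)) :
    permLen (w * sgen i) = permLen w + 1 ∨ permLen w = permLen (w * sgen i) + 1 := by
  rcases lt_trichotomy (w (fa i)) (w (fb i)) with h | h | h
  · exact Or.inl (permLen_ascend w i h)
  · exact absurd (w.injective h) (fa_ne_fb i)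
  · exact Or.inr (permLen_descend w i h)

lemma permLen_one : permLen (1 : Perm (Fin n)) = 0 := by
  rw [permLen, Finset.card_eq_zero, Finset.filter_eq_empty_iff]
  rintro p -
  simp only [Equiv.Perm.one_apply]
  rintro ⟨h1, h2⟩
  exact absurd h1 (not_lt.2 h2.le)

/-- simple generator indexed by `ℕ`, equal to `1` out of range -/
def sg (n : ℕ) (a : ℕ) : Perm (Fin n) := if h : a < n - 1 then sgen ⟨a, h⟩ else 1

/-- elementary weak-order cover matrix -/
def Emat (n : ℕ) (a : ℕ) : Matrix (Perm (Fin n)) (Perm (Fin n)) ℚ :=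
  Matrix.of fun u v =>
    if v = u * sg n a ∧ (permLen v = permLen u + 1 ∧ a < n - 1) then 1 else 0

lemma sg_mul_self (a : ℕ) : sg n a * sg n a = 1 := by
  unfold sg; split
  · exact sgen_mul_self _
  · simp

lemma permLen_mul_sg_le (u : Perm (Fin n)) (a : ℕ) :
    permLen (u * sg n a) ≤ permLen u + 1 := by
  unfold sg; split
  · rcases permLen_dichotomy u ⟨a, by assumption⟩ with h | h <;> omega
  · simp

lemma permLen_mul_list_le (l : List ℕ) (u : Perm (Fin n)) :
    permLen (u * (l.map (sg n)).prod) ≤ permLen u + l.length := by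
  induction l generalizing u with
  | nil => simp
  | cons a t ih =>
    have h1 := permLen_mul_sg_le u a
    have h2 := ih (u * sg n a)
    calc permLen (u * (List.map (sg n) (a :: t)).prod)
        = permLen (u * sg n a * (t.map (sg n)).prod) := by
          rw [List.map_cons, List.prod_cons, mul_assoc]
      _ ≤ permLen u + 1 + t.length := le_trans h2 (by omega)
      _ = permLen u + (a :: t).length := by simp [List.length_cons]; omega

lemma mul_E_apply (a : ℕ) (M : Matrix (Perm (Fin n)) (Perm (Fin n)) ℚ) (u v : Perm (Fin n)) :
    (Emat n a * M) u v =
      if permLen (u * sg n a) = permLen u + 1 ∧ a < n - 1 then M (u * sg n a) v else 0 := by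
  rw [Matrix.mul_apply]
  rw [Finset.sum_congr rfl (fun w _ => show Emat n a u w * M w v =
      if w = u * sg n a then
        (if permLen (u * sg n a) = permLen u + 1 ∧ a < n - 1 then M w v else 0) else 0 by
    by_cases h1 : w = u * sg n a
    · subst h1
      by_cases h2 : permLen (u * sg n a) = permLen u + 1 ∧ a < n - 1 <;>
        simp [Emat, h2]
    · simp [Emat, h1])]
  rw [Finset.sum_ite_eq' Finset.univ (u * sg n a)]
  simp

lemma prod_E_apply (l : List ℕ) (u v : Perm (Fin n)) :
    ((l.map (Emat n)).prod) u v =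
      if v = u * (l.map (sg n)).prod ∧ permLen v = permLen u + l.length then 1 else 0 := by
  induction l generalizing u with
  | nil =>
    by_cases h : v = u
    · subst h; simp [Matrix.one_apply]
    · simp [Matrix.one_apply, h, Ne.symm, fun hh => h hh]
  | cons a t ih =>
    rw [List.map_cons, List.prod_cons, mul_E_apply]
    by_cases hC : permLen (u * sg n a) = permLen u + 1 ∧ a < n - 1
    · rw [if_pos hC, ih (u * sg n a)]
      have hiff : (v = u * sg n a * (t.map (sg n)).prod ∧
          permLen v = permLen (u * sg n a) + t.length) ↔
          (v = u * (List.map (sg n) (a :: t)).prod ∧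
            permLen v = permLen u + (a :: t).length) := by
        rw [List.map_cons, List.prod_cons, ← mul_assoc, hC.1, List.length_cons]
        constructor
        · rintro ⟨h1, h2⟩; exact ⟨h1, by omega⟩
        · rintro ⟨h1, h2⟩; exact ⟨h1, by omega⟩
      by_cases h : v = u * (List.map (sg n) (a :: t)).prod ∧
          permLen v = permLen u + (a :: t).length
      · rw [if_pos h, if_pos (hiff.2 h)]
      · rw [if_neg h, if_neg (fun hh => h (hiff.1 hh))]
    · rw [if_neg hC]
      by_cases h : v = u * (List.map (sg n) (a :: t)).prod ∧
          permLen v = permLen u + (a :: t).length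
      · exfalso
        obtain ⟨h1, h2⟩ := h
        rw [List.map_cons, List.prod_cons, ← mul_assoc] at h1
        have hb := permLen_mul_list_le t (u * sg n a)
        rw [← h1] at hb
        simp only [List.length_cons] at h2
        by_cases ha : a < n - 1
        · rcases permLen_dichotomy (u) ⟨a, ha⟩ with hd | hd
          · exact hC ⟨by simpa [sg, ha] using hd, ha⟩
          · have : permLen (u * sg n a) + 1 = permLen u := by simpa [sg, ha] using hd.symm
            omega
        · have : sg n a = 1 := by simp [sg, ha]
          rw [this, mul_one] at hb
          omega
      · rw [if_neg h]

lemma Emat_invalid {a : ℕ} (h : ¬ a < n - 1) : Emat n a = 0 := by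
  ext u v
  simp [Emat, h]

lemma sg_invalid {a : ℕ} (h : ¬ a < n - 1) : sg n a = 1 := by simp [sg, h]

lemma E_sq (a : ℕ) : Emat n a * Emat n a = 0 := by
  ext u v
  have h := prod_E_apply [a, a] u v
  simp only [List.map_cons, List.map_nil, List.prod_cons, List.prod_nil, mul_one,
    List.length_cons, List.length_nil] at h
  rw [sg_mul_self, mul_one] at h
  rw [h]
  have : ¬ (v = u ∧ permLen v = permLen u + (0 + 1 + 1)) := by
    rintro ⟨rfl, h2⟩; omega
  rw [if_neg this]
  simp

lemma sg_comm {a b : ℕ} (hab : a + 2 ≤ b ∨ b + 2 ≤ a) : sg n a * sg n b = sg n b * sg n a := by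
  by_cases ha : a < n - 1
  · by_cases hb : b < n - 1
    · have hdisj : Equiv.Perm.Disjoint (sg n a) (sg n b) := by
        intro x
        by_cases hx : x = fa (⟨a, ha⟩ : Fin (n-1)) ∨ x = fb (⟨a, ha⟩ : Fin (n-1))
        · right
          have h1 : x ≠ fa (⟨b, hb⟩ : Fin (n-1)) := by
            rintro rfl
            rcases hx with h | h <;> (have := congrArg Fin.val h; simp [fa, fb] at this; try omega)
          have h2 : x ≠ fb (⟨b, hb⟩ : Fin (n-1)) := by
            rintro rfl
            rcases hx with h | h <;> (have := congrArg Fin.val h; simp [fa, fb] at this; try omega)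
          simp [sg, hb, sgen, Equiv.swap_apply_of_ne_of_ne h1 h2]
        · left
          push_neg at hx
          simp [sg, ha, sgen, Equiv.swap_apply_of_ne_of_ne hx.1 hx.2]
      exact hdisj.commute.eq
    · simp [sg_invalid hb]
  · simp [sg_invalid ha]

lemma sg_braid (a : ℕ) (h1 : a < n - 1) (h2 : a + 1 < n - 1) :
    sg n a * sg n (a+1) * sg n a = sg n (a+1) * sg n a * sg n (a+1) := by
  have hinv : ∀ i : Fin (n-1), (sgen i)⁻¹ = sgen i := fun i => by
    simp [sgen, Equiv.swap_inv]
  have e1 : sg n a = sgen ⟨a, h1⟩ := by simp [sg, h1]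
  have e2 : sg n (a+1) = sgen ⟨a+1, h2⟩ := by simp [sg, h2]
  rw [e1, e2]
  have key : ∀ (i j : Fin (n-1)), (j : ℕ) = (i : ℕ) + 1 →
      sgen i * sgen j * sgen i = Equiv.swap (fa i) (fb j) := by
    intro i j hij
    have hfaj : sgen i (fa j) = fa i := by
      have : fa j = fb i := Fin.ext (by simp [fa, fb, hij])
      rw [this]; simp [sgen, Equiv.swap_apply_right]
    have hfbj : sgen i (fb j) = fb j := by
      have hne1 : fb j ≠ fa i := by
        intro h; have := congrArg Fin.val h; simp [fa, fb, hij] at this; try omega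
      have hne2 : fb j ≠ fb i := by
        intro h; have := congrArg Fin.val h; simp [fa, fb, hij] at this; try omega
      simp [sgen, Equiv.swap_apply_of_ne_of_ne hne1 hne2]
    calc sgen i * sgen j * sgen i
        = sgen i * Equiv.swap (fa j) (fb j) * (sgen i)⁻¹ := by rw [hinv]; rfl
      _ = Equiv.swap (sgen i (fa j)) (sgen i (fb j)) := (Equiv.swap_apply_apply _ _ _).symm
      _ = Equiv.swap (fa i) (fb j) := by rw [hfaj, hfbj]
  have key2 : ∀ (i j : Fin (n-1)), (j : ℕ) = (i : ℕ) + 1 →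
      sgen j * sgen i * sgen j = Equiv.swap (fa i) (fb j) := by
    intro i j hij
    have hfai : sgen j (fa i) = fa i := by
      have hne1 : fa i ≠ fa j := by
        intro h; have := congrArg Fin.val h; simp [fa, fb, hij] at this; try omega
      have hne2 : fa i ≠ fb j := by
        intro h; have := congrArg Fin.val h; simp [fa, fb, hij] at this; try omega
      simp [sgen, Equiv.swap_apply_of_ne_of_ne hne1 hne2]
    have hfbi : sgen j (fb i) = fb j := by
      have : fb i = fa j := Fin.ext (by simp [fa, fb, hij])
      rw [this]; simp [sgen, Equiv.swap_apply_left]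
    calc sgen j * sgen i * sgen j
        = sgen j * Equiv.swap (fa i) (fb i) * (sgen j)⁻¹ := by rw [hinv]; rfl
      _ = Equiv.swap (sgen j (fa i)) (sgen j (fb i)) := (Equiv.swap_apply_apply _ _ _).symm
      _ = Equiv.swap (fa i) (fb j) := by rw [hfai, hfbi]
  rw [key ⟨a, h1⟩ ⟨a+1, h2⟩ rfl, key2 ⟨a, h1⟩ ⟨a+1, h2⟩ rfl]

lemma E_comm {a b : ℕ} (hab : a + 2 ≤ b ∨ b + 2 ≤ a) :
    Emat n a * Emat n b = Emat n b * Emat n a := by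
  ext u v
  have h1 := prod_E_apply [a, b] u v
  have h2 := prod_E_apply [b, a] u v
  simp only [List.map_cons, List.map_nil, List.prod_cons, List.prod_nil, mul_one,
    List.length_cons, List.length_nil] at h1 h2
  rw [h1, h2, sg_comm hab]

lemma E_braid (a : ℕ) :
    Emat n a * Emat n (a+1) * Emat n a = Emat n (a+1) * Emat n a * Emat n (a+1) := by
  by_cases h2 : a + 1 < n - 1
  · have h1 : a < n - 1 := by omega
    rw [mul_assoc, mul_assoc]
    ext u v
    have e1 := prod_E_apply [a, a+1, a] u v
    have e2 := prod_E_apply [a+1, a, a+1] u v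
    simp only [List.map_cons, List.map_nil, List.prod_cons, List.prod_nil, mul_one,
      List.length_cons, List.length_nil] at e1 e2
    have hprod : sg n a * (sg n (a+1) * sg n a) = sg n (a+1) * (sg n a * sg n (a+1)) := by
      rw [← mul_assoc, ← mul_assoc, sg_braid a h1 h2]
    rw [e1, e2, hprod]
  · by_cases h1 : a < n - 1
    · simp [Emat_invalid h2]
    · simp [Emat_invalid h1, Emat_invalid h2]

section RingLemmas

variable {A : Type*} [Ring A] [Module ℚ A] [SMulCommClass ℚ A A] [IsScalarTower ℚ A A]

lemma gen_add (x y : ℚ) (a : A) (ha : a * a = 0) :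
    (1 + x • a) * (1 + y • a) = 1 + (x + y) • a := by
  simp only [mul_add, add_mul, one_mul, mul_one, smul_mul_assoc, mul_smul_comm, smul_smul,
    ha, smul_zero, add_zero, add_smul]
  abel

lemma gen_comm (x y : ℚ) (a b : A) (hc : a * b = b * a) :
    (1 + x • a) * (1 + y • b) = (1 + y • b) * (1 + x • a) := by
  simp only [mul_add, add_mul, one_mul, mul_one, smul_mul_assoc, mul_smul_comm, smul_smul, hc,
    mul_comm x y]
  module

lemma gen_ybe (x y : ℚ) (a b : A) (ha : a * a = 0) (hb : b * b = 0)
    (hbr : a * b * a = b * a * b) :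
    (1 + x • a) * (1 + (x + y) • b) * (1 + y • a)
      = (1 + y • b) * (1 + (x + y) • a) * (1 + x • b) := by
  have ha2 : ∀ c : A, a * (a * c) = 0 := fun c => by rw [← mul_assoc, ha, zero_mul]
  have hb2 : ∀ c : A, b * (b * c) = 0 := fun c => by rw [← mul_assoc, hb, zero_mul]
  have hbr2 : a * (b * a) = b * (a * b) := by
    rw [← mul_assoc, hbr, mul_assoc]
  simp only [mul_add, add_mul, one_mul, mul_one, smul_mul_assoc, mul_smul_comm, smul_smul,
    mul_assoc, ha, hb, ha2, hb2, hbr2, smul_zero, add_zero, zero_mul, mul_zero]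
  module

end RingLemmas

section Assoc

variable {A : Type*} [Monoid A] {a b c d f g X : A}

lemma assoc32 (e : a * b * c = d * f) : a * (b * c) = d * f := by
  rw [← mul_assoc, e]

lemma reassoc22 (e : a * b = c * d) (X : A) : a * (b * X) = c * (d * X) := by
  rw [← mul_assoc, e, mul_assoc]

lemma reassoc32 (e : a * b * c = d * f) (X : A) : a * (b * (c * X)) = d * (f * X) := by
  rw [← mul_assoc, ← mul_assoc, e, mul_assoc]

lemma reassoc33 (e : a * b * c = d * f * g) (X : A) :
    a * (b * (c * X)) = d * (f * (g * X)) := by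
  rw [← mul_assoc, ← mul_assoc, e, mul_assoc, mul_assoc]

end Assoc

variable (n) in
/-- the factor `1 + x Eᵢ` -/
def hMat (x : ℚ) (a : ℕ) : Matrix (Perm (Fin n)) (Perm (Fin n)) ℚ := 1 + x • Emat n a

variable (n) in
/-- `Amat x k = h_{k-1} ⋯ h_1 h_0` -/
def Amat (x : ℚ) : ℕ → Matrix (Perm (Fin n)) (Perm (Fin n)) ℚ
  | 0 => 1
  | (k+1) => hMat n x k * Amat x k

variable (n) in
/-- `Gmat x m = A_1 A_2 ⋯ A_m` -/
def Gmat (x : ℚ) : ℕ → Matrix (Perm (Fin n)) (Perm (Fin n)) ℚ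
  | 0 => 1
  | (m+1) => Gmat x m * Amat n x (m+1)

lemma hMat_add (x y : ℚ) (a : ℕ) : hMat n x a * hMat n y a = hMat n (x+y) a :=
  gen_add x y _ (E_sq a)

lemma hMat_comm {a b : ℕ} (hab : a + 2 ≤ b ∨ b + 2 ≤ a) (x y : ℚ) :
    hMat n x a * hMat n y b = hMat n y b * hMat n x a :=
  gen_comm x y _ _ (E_comm hab)

lemma hMat_ybe {a b : ℕ} (hadj : b = a + 1 ∨ a = b + 1) (x y : ℚ) :
    hMat n x a * hMat n (x+y) b * hMat n y a = hMat n y b * hMat n (x+y) a * hMat n x b := by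
  rcases hadj with rfl | rfl
  · exact gen_ybe x y _ _ (E_sq a) (E_sq (a+1)) (E_braid a)
  · exact gen_ybe x y _ _ (E_sq (b+1)) (E_sq b) (E_braid b).symm

lemma hMat_A_comm {k m : ℕ} (h : k + 1 ≤ m) (x y : ℚ) :
    hMat n x m * Amat n y k = Amat n y k * hMat n x m := by
  induction k with
  | zero => simp [Amat]
  | succ k ih =>
    rw [Amat, ← mul_assoc, hMat_comm (by omega), mul_assoc, ih (by omega), ← mul_assoc]

lemma hMat_G_comm {k m : ℕ} (h : k + 1 ≤ m) (x y : ℚ) :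
    hMat n x m * Gmat n y k = Gmat n y k * hMat n x m := by
  induction k with
  | zero => simp [Gmat]
  | succ k ih =>
    rw [Gmat, ← mul_assoc, ih (by omega), mul_assoc, hMat_A_comm (by omega), ← mul_assoc]

lemma lemK (k : ℕ) (x y : ℚ) :
    hMat n x k * Amat n (x+y) k * Amat n y (k+1) = Amat n y k * Amat n (x+y) (k+1) := by
  induction k generalizing x y with
  | zero =>
    show hMat n x 0 * 1 * (hMat n y 0 * 1) = 1 * (hMat n (x+y) 0 * 1)
    simp only [mul_one, one_mul]; rw [hMat_add]
  | succ k ih =>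
    have e1 : Amat n (x+y) (k+1) = hMat n (x+y) k * Amat n (x+y) k := rfl
    have e2 : Amat n y (k+2) = hMat n y (k+1) * Amat n y (k+1) := rfl
    have e3 : Amat n y (k+1) = hMat n y k * Amat n y k := rfl
    have e4 : Amat n (x+y) (k+2) = hMat n (x+y) (k+1) * Amat n (x+y) (k+1) := rfl
    calc hMat n x (k+1) * Amat n (x+y) (k+1) * Amat n y (k+2)
        = hMat n x (k+1) * (hMat n (x+y) k * (Amat n (x+y) k *
            (hMat n y (k+1) * Amat n y (k+1)))) := by
          rw [e1, e2]; simp only [mul_assoc]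
      _ = hMat n x (k+1) * (hMat n (x+y) k * (hMat n y (k+1) *
            (Amat n (x+y) k * Amat n y (k+1)))) := by
          rw [reassoc22 ((hMat_A_comm (le_refl (k+1)) y (x+y)).symm)]
      _ = hMat n y k * (hMat n (x+y) (k+1) * (hMat n x k *
            (Amat n (x+y) k * Amat n y (k+1)))) := by
          rw [reassoc33 (hMat_ybe (Or.inr rfl) x y)]
      _ = hMat n y k * (hMat n (x+y) (k+1) * (Amat n y k * Amat n (x+y) (k+1))) := by
          rw [assoc32 (ih x y)]
      _ = hMat n y k * (Amat n y k * (hMat n (x+y) (k+1) * Amat n (x+y) (k+1))) := by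
          rw [reassoc22 (hMat_A_comm (le_refl (k+1)) (x+y) y)]
      _ = Amat n y (k+1) * Amat n (x+y) (k+2) := by
          rw [e3, e4]; simp only [mul_assoc]

lemma lemM (k : ℕ) (x y : ℚ) :
    Amat n x (k+1) * Gmat n y k * Amat n y (k+1) = Gmat n y k * Amat n (x+y) (k+1) := by
  induction k generalizing x y with
  | zero =>
    show Amat n x 1 * 1 * Amat n y 1 = 1 * Amat n (x+y) 1
    rw [mul_one, one_mul]
    show hMat n x 0 * 1 * (hMat n y 0 * 1) = hMat n (x+y) 0 * 1
    rw [mul_one, mul_one, mul_one, hMat_add]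
  | succ k ih =>
    have e0 : Gmat n y (k+1) = Gmat n y k * Amat n y (k+1) := rfl
    have eA : Amat n x (k+2) = hMat n x (k+1) * Amat n x (k+1) := rfl
    calc Amat n x (k+2) * Gmat n y (k+1) * Amat n y (k+2)
        = hMat n x (k+1) * (Amat n x (k+1) * (Gmat n y k *
            (Amat n y (k+1) * Amat n y (k+2)))) := by
          rw [eA, e0]; simp only [mul_assoc]
      _ = hMat n x (k+1) * (Gmat n y k * (Amat n (x+y) (k+1) * Amat n y (k+2))) := by
          rw [reassoc32 (ih x y)]
      _ = Gmat n y k * (hMat n x (k+1) * (Amat n (x+y) (k+1) * Amat n y (k+2))) := by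
          rw [reassoc22 (hMat_G_comm (le_refl (k+1)) x y)]
      _ = Gmat n y k * (Amat n y (k+1) * Amat n (x+y) (k+2)) := by
          rw [assoc32 (lemK (k+1) x y)]
      _ = Gmat n y (k+1) * Amat n (x+y) (k+2) := by
          rw [e0]; simp only [mul_assoc]

lemma lemL (m : ℕ) (x y : ℚ) : Gmat n x m * Gmat n y m = Gmat n (x+y) m := by
  induction m generalizing x y with
  | zero => show (1 : Matrix (Perm (Fin n)) (Perm (Fin n)) ℚ) * 1 = 1; rw [mul_one]
  | succ m ih =>
    have e0 : ∀ z : ℚ, Gmat n z (m+1) = Gmat n z m * Amat n z (m+1) := fun _ => rfl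
    calc Gmat n x (m+1) * Gmat n y (m+1)
        = Gmat n x m * (Amat n x (m+1) * (Gmat n y m * Amat n y (m+1))) := by
          rw [e0, e0]; simp only [mul_assoc]
      _ = Gmat n x m * (Gmat n y m * Amat n (x+y) (m+1)) := by
          rw [assoc32 (lemM m x y)]
      _ = Gmat n (x+y) (m+1) := by
          rw [e0, ← mul_assoc, ih x y]

def wordA (k : ℕ) : List ℕ := (List.range k).reverse

def wordG : ℕ → List ℕ
  | 0 => []
  | (m+1) => wordG m ++ wordA (m+1)

lemma wordA_succ (k : ℕ) : wordA (k+1) = k :: wordA k := by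
  unfold wordA
  rw [List.range_succ, List.reverse_append]
  rfl

lemma Amat_eq_prod (x : ℚ) (k : ℕ) : Amat n x k = ((wordA k).map (hMat n x)).prod := by
  induction k with
  | zero => rfl
  | succ k ih => rw [wordA_succ, List.map_cons, List.prod_cons, ← ih]; rfl

lemma Gmat_eq_prod (x : ℚ) (m : ℕ) : Gmat n x m = ((wordG m).map (hMat n x)).prod := by
  induction m with
  | zero => rfl
  | succ m ih =>
    show Gmat n x m * Amat n x (m+1) = _
    rw [wordG, List.map_append, List.prod_append, ← ih, ← Amat_eq_prod]

variable (n) in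
/-- sum over `k`-element subwords of `l` of the products of the `Emat`s -/
def Csub : List ℕ → ℕ → Matrix (Perm (Fin n)) (Perm (Fin n)) ℚ
  | _, 0 => 1
  | [], (_+1) => 0
  | (a :: t), (k+1) => Csub t (k+1) + Emat n a * Csub t k

lemma Csub_zero (l : List ℕ) : Csub n l 0 = 1 := by
  cases l <;> rfl

lemma Csub_gt : ∀ (l : List ℕ) (k : ℕ), l.length < k → Csub n l k = 0
  | [], (_+1), _ => rfl
  | (a :: t), (k+1), h => by
    have h' : t.length < k := by simp at h; omega
    rw [Csub, Csub_gt t (k+1) (by omega), Csub_gt t k h', mul_zero, add_zero]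

lemma prod_hMat_eq_sum (x : ℚ) (l : List ℕ) :
    ((l.map (hMat n x)).prod) = ∑ k ∈ Finset.range (l.length + 1), x^k • Csub n l k := by
  induction l with
  | nil => simp [Csub]
  | cons a t ih =>
    have hsplit : ∑ k ∈ Finset.range ((a :: t).length + 1), x^k • Csub n (a :: t) k
        = (∑ k ∈ Finset.range (t.length + 1), x^(k+1) • Csub n (a :: t) (k+1))
          + x^0 • Csub n (a :: t) 0 := by
      rw [List.length_cons, Finset.sum_range_succ' (fun k => x^k • Csub n (a :: t) k)]
    have hterm : ∀ k, x^(k+1) • Csub n (a :: t) (k+1)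
        = x^(k+1) • Csub n t (k+1) + x^(k+1) • (Emat n a * Csub n t k) := by
      intro k; rw [Csub, smul_add]
    have h1 : (∑ k ∈ Finset.range (t.length + 1), x^(k+1) • Csub n t (k+1))
          + x^0 • Csub n (a :: t) 0
        = ∑ k ∈ Finset.range (t.length + 1), x^k • Csub n t k := by
      rw [Csub_zero, Finset.sum_range_succ, Csub_gt t (t.length + 1) (by omega), smul_zero,
        add_zero, Finset.sum_range_succ' (fun k => x^k • Csub n t k) t.length, Csub_zero]
    have h2 : hMat n x a * ∑ k ∈ Finset.range (t.length + 1), x^k • Csub n t k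
        = (∑ k ∈ Finset.range (t.length + 1), x^k • Csub n t k)
          + ∑ k ∈ Finset.range (t.length + 1), x^(k+1) • (Emat n a * Csub n t k) := by
      rw [hMat, add_mul, one_mul, smul_mul_assoc, Finset.mul_sum]
      congr 1
      rw [Finset.smul_sum]
      refine Finset.sum_congr rfl (fun k _ => ?_)
      rw [mul_smul_comm, smul_smul, pow_succ, mul_comm (x^k) x]
    rw [List.map_cons, List.prod_cons, ih, h2, hsplit,
      Finset.sum_congr rfl (fun k _ => hterm k), Finset.sum_add_distrib, ← h1]
    abel

section Extract

open MvPolynomial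

lemma single_add_single_inj {j k j' k' : ℕ}
    (he : Finsupp.single (0 : Fin 2) j' + Finsupp.single (1 : Fin 2) k'
        = Finsupp.single (0 : Fin 2) j + Finsupp.single (1 : Fin 2) k) :
    j' = j ∧ k' = k := by
  constructor
  · have := congrArg (fun f => f (0 : Fin 2)) he
    simpa using this
  · have := congrArg (fun f => f (1 : Fin 2)) he
    simpa using this

lemma coeff_aux (j k j' k' : ℕ) (r : ℚ) :
    MvPolynomial.coeff (Finsupp.single (0 : Fin 2) j + Finsupp.single (1 : Fin 2) k)
      ((MvPolynomial.X (0 : Fin 2))^j' * (MvPolynomial.X (1 : Fin 2))^k' * MvPolynomial.C r)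
    = if j' = j ∧ k' = k then r else 0 := by
  rw [MvPolynomial.X_pow_eq_monomial, MvPolynomial.X_pow_eq_monomial, MvPolynomial.monomial_mul,
    mul_comm, MvPolynomial.C_mul_monomial, MvPolynomial.coeff_monomial]
  by_cases h : j' = j ∧ k' = k
  · obtain ⟨rfl, rfl⟩ := h
    simp
  · rw [if_neg h, if_neg]
    intro he
    exact h (single_add_single_inj he)

lemma ext2 (M : ℕ) (c : ℕ → ℕ → ℚ) (d : ℕ → ℚ)
    (h : ∀ x y : ℚ, (∑ j ∈ Finset.range M, ∑ k ∈ Finset.range M, (x^j * y^k) * c j k)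
        = ∑ m ∈ Finset.range M, (x+y)^m * d m)
    {j k : ℕ} (hj : j < M) (hk : k < M) (hjk : j + k < M) :
    c j k = ((j+k).choose j : ℚ) * d (j+k) := by
  classical
  set P : MvPolynomial (Fin 2) ℚ :=
    ∑ j' ∈ Finset.range M, ∑ k' ∈ Finset.range M,
      (X (0 : Fin 2))^j' * (X (1 : Fin 2))^k' * C (c j' k') with hP
  set Q : MvPolynomial (Fin 2) ℚ :=
    ∑ m ∈ Finset.range M, (X (0 : Fin 2) + X (1 : Fin 2))^m * C (d m) with hQ
  have hPQ : P = Q := by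
    apply MvPolynomial.funext
    intro x
    rw [hP, hQ]
    simp only [map_sum, map_mul, map_pow, map_add, eval_X, eval_C]
    exact h (x 0) (x 1)
  set μ : Fin 2 →₀ ℕ := Finsupp.single (0 : Fin 2) j + Finsupp.single (1 : Fin 2) k with hμ
  have hcP : MvPolynomial.coeff μ P = c j k := by
    rw [hP, MvPolynomial.coeff_sum]
    rw [Finset.sum_congr rfl (fun j' _ => MvPolynomial.coeff_sum _ _ _)]
    rw [Finset.sum_congr rfl (fun j' _ => Finset.sum_congr rfl
      (fun k' _ => coeff_aux j k j' k' (c j' k')))]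
    rw [Finset.sum_congr rfl (fun j' hj' => show
        (∑ k' ∈ Finset.range M, if j' = j ∧ k' = k then c j' k' else 0)
          = if j' = j then c j' k else 0 by
      by_cases hjj : j' = j
      · subst hjj
        rw [if_pos rfl]
        rw [Finset.sum_congr rfl (fun k' _ => show
            (if j' = j' ∧ k' = k then c j' k' else 0) = if k' = k then c j' k' else 0 by
          by_cases hkk : k' = k <;> simp [hkk])]
        rw [Finset.sum_ite_eq' (Finset.range M) k]
        rw [if_pos (Finset.mem_range.2 hk)]
      · rw [if_neg hjj]
        exact Finset.sum_eq_zero fun k' _ => if_neg (fun hh => hjj hh.1))]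
    rw [Finset.sum_ite_eq' (Finset.range M) j, if_pos (Finset.mem_range.2 hj)]
  have hcQ : MvPolynomial.coeff μ Q = ((j+k).choose j : ℚ) * d (j+k) := by
    rw [hQ, MvPolynomial.coeff_sum]
    rw [Finset.sum_congr rfl (fun m hm => show
        MvPolynomial.coeff μ ((X (0 : Fin 2) + X (1 : Fin 2))^m * C (d m))
          = if m = j + k then ((j+k).choose j : ℚ) * d m else 0 by
      rw [add_pow, Finset.sum_mul]
      rw [MvPolynomial.coeff_sum]
      rw [Finset.sum_congr rfl (fun t _ => show
          MvPolynomial.coeff μ ((X (0 : Fin 2))^t * (X (1 : Fin 2))^(m-t)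
              * (m.choose t : MvPolynomial (Fin 2) ℚ) * C (d m))
            = if t = j ∧ m - t = k then ((m.choose t : ℚ)) * d m else 0 by
        have hcast : (m.choose t : MvPolynomial (Fin 2) ℚ) = C ((m.choose t : ℚ)) := by
          simp
        rw [hcast, mul_assoc, ← MvPolynomial.C_mul, coeff_aux])]
      by_cases hm : m = j + k
      · subst hm
        rw [if_pos rfl]
        rw [Finset.sum_eq_single j]
        · rw [if_pos ⟨rfl, by omega⟩]
        · intro t ht hne
          rw [if_neg]
          rintro ⟨rfl, -⟩
          exact hne rfl
        · intro hnj
          exact absurd (Finset.mem_range.2 (by omega)) hnj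
      · rw [if_neg hm]
        refine Finset.sum_eq_zero fun t ht => if_neg ?_
        rintro ⟨rfl, hmt⟩
        rw [Finset.mem_range] at ht
        omega)]
    rw [Finset.sum_ite_eq' (Finset.range M) (j+k), if_pos (Finset.mem_range.2 hjk)]
  rw [← hcP, hPQ, hcQ]

end Extract

lemma list_range_map_sum {β : Type*} [AddCommMonoid β] (f : ℕ → β) (k : ℕ) :
    ((List.range k).map f).sum = ∑ i ∈ Finset.range k, f i := by
  induction k with
  | zero => simp
  | succ k ih => rw [List.range_succ, List.map_append, List.sum_append, ih,
      Finset.sum_range_succ]; simp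

lemma Csub_one (l : List ℕ) : Csub n l 1 = (l.map (Emat n)).sum := by
  induction l with
  | nil => rfl
  | cons a t ih =>
    show Csub n t 1 + Emat n a * Csub n t 0 = _
    rw [Csub_zero, mul_one, ih, List.map_cons, List.sum_cons]
    abel

lemma wordA_map_sum (k : ℕ) : ((wordA k).map (Emat n)).sum = ∑ i ∈ Finset.range k, Emat n i := by
  rw [wordA, List.map_reverse, List.sum_reverse, list_range_map_sum]

lemma theta_eq (m : ℕ) :
    ((wordG m).map (Emat n)).sum = ∑ k ∈ Finset.range m, ∑ i ∈ Finset.range (k+1), Emat n i := by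
  induction m with
  | zero => rfl
  | succ m ih =>
    show ((wordG m ++ wordA (m+1)).map (Emat n)).sum = _
    rw [List.map_append, List.sum_append, ih, wordA_map_sum,
      Finset.sum_range_succ (fun k => ∑ i ∈ Finset.range (k+1), Emat n i) m]

lemma count_swap (m : ℕ) :
    (∑ k ∈ Finset.range m, ∑ i ∈ Finset.range (k+1), Emat n i)
      = ∑ i ∈ Finset.range m, (m - i) • Emat n i := by
  induction m with
  | zero => rfl
  | succ m ih =>
    rw [Finset.sum_range_succ, ih,
      Finset.sum_range_succ (fun i => (m + 1 - i) • Emat n i) m]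
    have h1 : (m + 1 - m) • Emat n m = Emat n m := by
      have : m + 1 - m = 1 := by omega
      rw [this, one_smul]
    rw [h1, Finset.sum_range_succ (fun i => Emat n i) m, ← add_assoc]
    congr 1
    rw [← Finset.sum_add_distrib]
    refine Finset.sum_congr rfl fun i hi => ?_
    rw [Finset.mem_range] at hi
    have : m + 1 - i = (m - i) + 1 := by omega
    rw [this, add_smul, one_smul]

lemma Gmat_sum (x : ℚ) (m : ℕ) :
    Gmat n x m = ∑ k ∈ Finset.range ((wordG m).length + 1), x^k • Csub n (wordG m) k := by
  rw [Gmat_eq_prod, prod_hMat_eq_sum]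

lemma Crel {k : ℕ} (hk : k + 1 ≤ (wordG (n-1)).length) :
    Csub n (wordG (n-1)) 1 * Csub n (wordG (n-1)) k
      = ((k+1 : ℚ)) • Csub n (wordG (n-1)) (k+1) := by
  set W := wordG (n-1) with hW
  set N := W.length with hNdef
  ext u v
  have hyp : ∀ x y : ℚ,
      (∑ j ∈ Finset.range (N+1), ∑ k' ∈ Finset.range (N+1),
        (x^j * y^k') * ((Csub n W j * Csub n W k') u v))
      = ∑ m' ∈ Finset.range (N+1), (x+y)^m' * (Csub n W m' u v) := by
    intro x y
    have hsg := lemL (n := n) (n-1) x y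
    rw [Gmat_sum x (n-1), Gmat_sum y (n-1), Gmat_sum (x+y) (n-1)] at hsg
    have hmat : (∑ j ∈ Finset.range (N+1), x^j • Csub n W j) *
        (∑ k' ∈ Finset.range (N+1), y^k' • Csub n W k')
        = ∑ j ∈ Finset.range (N+1), ∑ k' ∈ Finset.range (N+1),
            (x^j * y^k') • (Csub n W j * Csub n W k') := by
      rw [Finset.sum_mul]
      refine Finset.sum_congr rfl fun j _ => ?_
      rw [Finset.mul_sum]
      refine Finset.sum_congr rfl fun k' _ => ?_
      rw [smul_mul_assoc, mul_smul_comm, smul_smul]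
    rw [hmat] at hsg
    have := congrArg (fun M : Matrix (Perm (Fin n)) (Perm (Fin n)) ℚ => M u v) hsg
    simpa [Matrix.sum_apply, Matrix.smul_apply, smul_eq_mul] using this
  have h2 := ext2 (N+1) (fun j k' => (Csub n W j * Csub n W k') u v)
    (fun m' => Csub n W m' u v) hyp (j := 1) (k := k) (by omega) (by omega) (by omega)
  simp only [Nat.choose_one_right] at h2
  rw [Matrix.smul_apply, smul_eq_mul]
  rw [h2]
  norm_num
  rw [Nat.add_comm 1 k]
  ring

lemma Cpow {m : ℕ} (hm : m ≤ (wordG (n-1)).length) :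
    (Csub n (wordG (n-1)) 1)^m = (m.factorial : ℚ) • Csub n (wordG (n-1)) m := by
  induction m with
  | zero => simp [Csub_zero]
  | succ m ih =>
    rw [pow_succ', ih (by omega), mul_smul_comm, Crel (by omega), smul_smul]
    congr 1
    rw [Nat.factorial_succ]
    push_cast
    ring

lemma Csub_top : ∀ (l : List ℕ), Csub n l l.length = (l.map (Emat n)).prod
  | [] => rfl
  | (a :: t) => by
    show Csub n t (t.length + 1) + Emat n a * Csub n t t.length = _
    rw [Csub_gt t (t.length + 1) (by omega), Csub_top t, List.map_cons, List.prod_cons, zero_add]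

lemma prodA_apply (k : ℕ) (hk : k ≤ n-1) (x : Fin n) :
    ((((wordA k).map (sg n)).prod x : Fin n) : ℕ)
      = if (x:ℕ) = 0 then k else if (x:ℕ) ≤ k then (x:ℕ) - 1 else (x:ℕ) := by
  induction k with
  | zero =>
    simp only [wordA, List.range_zero, List.reverse_nil, List.map_nil, List.prod_nil,
      Equiv.Perm.one_apply]
    split_ifs <;> omega
  | succ k ih =>
    rw [wordA_succ, List.map_cons, List.prod_cons, Equiv.Perm.mul_apply]
    have hk' : k < n - 1 := by omega
    have hsg : sg n k = sgen ⟨k, hk'⟩ := by simp [sg, hk']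
    rw [hsg, sgen_val]
    rw [ih (by omega)]
    have hx := x.isLt
    simp only []
    split_ifs <;> omega

lemma prodG_apply (m : ℕ) (hm : m ≤ n-1) (x : Fin n) :
    ((((wordG m).map (sg n)).prod x : Fin n) : ℕ)
      = if (x:ℕ) ≤ m then m - (x:ℕ) else (x:ℕ) := by
  induction m generalizing x with
  | zero =>
    simp only [wordG, List.map_nil, List.prod_nil, Equiv.Perm.one_apply]
    split_ifs <;> omega
  | succ m ih =>
    show (((((wordG m) ++ wordA (m+1)).map (sg n)).prod x : Fin n) : ℕ) = _
    rw [List.map_append, List.prod_append, Equiv.Perm.mul_apply]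
    have h1 := prodA_apply (m+1) hm x
    have h2 := ih (by omega) (((wordA (m+1)).map (sg n)).prod x)
    rw [h2, h1]
    have hx := x.isLt
    split_ifs <;> omega

lemma prodW_eq_longest : ((wordG (n-1)).map (sg n)).prod = longest n := by
  apply Equiv.ext; intro x
  apply Fin.ext
  rw [prodG_apply (n-1) le_rfl x]
  have hx := x.isLt
  have : ((longest n x : Fin n) : ℕ) = n - 1 - (x : ℕ) := by
    show ((Fin.rev x : Fin n) : ℕ) = n - 1 - (x : ℕ)
    rw [Fin.val_rev]
    omega
  rw [this]
  split_ifs <;> omega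

lemma card_lt_pairs : ((Finset.univ.filter fun p : Fin n × Fin n => p.1 < p.2)).card
    = n * (n-1) / 2 := by
  classical
  have hST : ((Finset.univ.filter fun p : Fin n × Fin n => p.1 < p.2)).card
      = ((Finset.univ.filter fun p : Fin n × Fin n => p.2 < p.1)).card := by
    refine Finset.card_bij' (fun p _ => (p.2, p.1)) (fun p _ => (p.2, p.1)) ?_ ?_ ?_ ?_
    · intro p hp
      simp only [Finset.mem_filter, Finset.mem_univ, true_and] at hp ⊢
      exact hp
    · intro p hp
      simp only [Finset.mem_filter, Finset.mem_univ, true_and] at hp ⊢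
      exact hp
    · intro p _; rfl
    · intro p _; rfl
  have hDcard : ((Finset.univ.filter fun p : Fin n × Fin n => p.1 = p.2)).card = n := by
    rw [show (Finset.univ.filter fun p : Fin n × Fin n => p.1 = p.2)
        = Finset.univ.image (fun x : Fin n => (x, x)) from ?_]
    · rw [Finset.card_image_of_injective _ (fun a b h => (Prod.ext_iff.1 h).1)]
      simp
    · ext p
      simp only [Finset.mem_filter, Finset.mem_univ, true_and, Finset.mem_image]
      constructor
      · intro h
        refine ⟨p.1, ?_⟩
        obtain ⟨a, b⟩ := p
        simp only at h
        subst h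
        rfl
      · rintro ⟨a, rfl⟩; rfl
  have htotal : ((Finset.univ.filter fun p : Fin n × Fin n => p.1 < p.2)).card
      + ((Finset.univ.filter fun p : Fin n × Fin n => p.2 < p.1)).card
      + ((Finset.univ.filter fun p : Fin n × Fin n => p.1 = p.2)).card = n * n := by
    rw [← Finset.card_union_of_disjoint, ← Finset.card_union_of_disjoint]
    · have : ((Finset.univ.filter fun p : Fin n × Fin n => p.1 < p.2)
          ∪ (Finset.univ.filter fun p : Fin n × Fin n => p.2 < p.1))
          ∪ (Finset.univ.filter fun p : Fin n × Fin n => p.1 = p.2)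
          = (Finset.univ : Finset (Fin n × Fin n)) := by
        ext p
        simp only [Finset.mem_union, Finset.mem_filter, Finset.mem_univ, true_and, iff_true]
        rcases lt_trichotomy p.1 p.2 with h | h | h
        · exact Or.inl (Or.inl h)
        · exact Or.inr h
        · exact Or.inl (Or.inr h)
      rw [this]
      simp
    · rw [Finset.disjoint_left]
      intro p hp hq
      simp only [Finset.mem_union, Finset.mem_filter, Finset.mem_univ, true_and] at hp hq
      rcases hp with h | h <;> (rw [hq] at h; exact absurd h (lt_irrefl _))
    · rw [Finset.disjoint_left]
      intro p hp hq
      simp only [Finset.mem_filter, Finset.mem_univ, true_and] at hp hq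
      exact absurd hq (not_lt.2 hp.le)
  have hmul : n * n - n = n * (n - 1) := by
    cases n with
    | zero => simp
    | succ m => simp [Nat.succ_sub_one, Nat.mul_succ, Nat.succ_mul]
  omega

lemma permLen_longest : permLen (longest n) = n * (n-1) / 2 := by
  rw [permLen, ← card_lt_pairs]
  congr 1
  apply Finset.filter_congr
  intro p _
  show (p.1 < p.2 ∧ longest n p.2 < longest n p.1) ↔ _
  have : longest n p.2 < longest n p.1 ↔ p.1 < p.2 := by
    show Fin.rev p.2 < Fin.rev p.1 ↔ _
    exact Fin.rev_lt_rev
  rw [this, and_self]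

lemma wordG_length_two (m : ℕ) : 2 * (wordG m).length = m * (m+1) := by
  induction m with
  | zero => rfl
  | succ m ih =>
    show 2 * (wordG m ++ wordA (m+1)).length = _
    rw [List.length_append]
    have hA : (wordA (m+1)).length = m+1 := by simp [wordA]
    rw [hA, Nat.mul_add, ih]
    ring

lemma longest_mul_self : longest n * longest n = 1 := by
  apply Equiv.ext
  intro x
  show Fin.rev (Fin.rev x) = x
  exact Fin.rev_rev x

variable (n) in
def conjMap (M : Matrix (Perm (Fin n)) (Perm (Fin n)) ℚ) :
    Matrix (Perm (Fin n)) (Perm (Fin n)) ℚ :=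
  Matrix.of fun u v => M (longest n * u * longest n) (longest n * v * longest n)

lemma conj_invol (w : Perm (Fin n)) :
    longest n * (longest n * w * longest n) * longest n = w := by
  have h := longest_mul_self (n := n)
  calc longest n * (longest n * w * longest n) * longest n
      = (longest n * longest n) * w * (longest n * longest n) := by
        simp only [mul_assoc]
    _ = w := by rw [h, one_mul, mul_one]

lemma permLen_conj (w : Perm (Fin n)) :
    permLen (longest n * w * longest n) = permLen w := by
  unfold permLen
  refine Finset.card_bij' (fun p _ => (Fin.rev p.2, Fin.rev p.1))
    (fun p _ => (Fin.rev p.2, Fin.rev p.1)) ?_ ?_ ?_ ?_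
  · intro p hp
    simp only [Finset.mem_filter, Finset.mem_univ, true_and] at hp ⊢
    obtain ⟨h1, h2⟩ := hp
    have e : ∀ z : Fin n, (longest n * w * longest n) z = Fin.rev (w (Fin.rev z)) := by
      intro z; rfl
    rw [e, e] at h2
    exact ⟨Fin.rev_lt_rev.2 h1, Fin.rev_lt_rev.1 h2⟩
  · intro p hp
    simp only [Finset.mem_filter, Finset.mem_univ, true_and] at hp ⊢
    obtain ⟨h1, h2⟩ := hp
    have e : ∀ z : Fin n, (longest n * w * longest n) z = Fin.rev (w (Fin.rev z)) := by
      intro z; rfl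
    rw [e, e]
    exact ⟨Fin.rev_lt_rev.2 h1, by simp only [Fin.rev_rev]; exact Fin.rev_lt_rev.2 h2⟩
  · intro p _
    simp [Fin.rev_rev]
  · intro p _
    simp [Fin.rev_rev]

lemma conj_one : conjMap n (1 : Matrix (Perm (Fin n)) (Perm (Fin n)) ℚ) = 1 := by
  ext u v
  show (1 : Matrix (Perm (Fin n)) (Perm (Fin n)) ℚ) _ _ = (1 : Matrix _ _ ℚ) u v
  rw [Matrix.one_apply, Matrix.one_apply]
  congr 1
  simp only [eq_iff_iff]
  constructor
  · intro h
    have := congrArg (fun z => longest n * z * longest n) h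
    simpa [conj_invol] using this
  · rintro rfl; rfl

lemma conj_mul (M M' : Matrix (Perm (Fin n)) (Perm (Fin n)) ℚ) :
    conjMap n (M * M') = conjMap n M * conjMap n M' := by
  ext u v
  show (M * M') _ _ = _
  rw [Matrix.mul_apply, Matrix.mul_apply]
  set φ : Perm (Fin n) ≃ Perm (Fin n) :=
    ⟨fun w => longest n * w * longest n, fun w => longest n * w * longest n,
      conj_invol, conj_invol⟩ with hφ
  rw [← Equiv.sum_comp φ (fun w => M (longest n * u * longest n) w
      * M' w (longest n * v * longest n))]
  rfl

lemma conj_pow (M : Matrix (Perm (Fin n)) (Perm (Fin n)) ℚ) (k : ℕ) :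
    conjMap n (M ^ k) = (conjMap n M) ^ k := by
  induction k with
  | zero => simpa using conj_one
  | succ k ih => rw [pow_succ, pow_succ, conj_mul, ih]

lemma conj_sum {α : Type*} (s : Finset α) (f : α → Matrix (Perm (Fin n)) (Perm (Fin n)) ℚ) :
    conjMap n (∑ i ∈ s, f i) = ∑ i ∈ s, conjMap n (f i) := by
  ext u v
  show (∑ i ∈ s, f i) _ _ = _
  rw [Matrix.sum_apply, Matrix.sum_apply]
  rfl

lemma conj_nsmul (c : ℕ) (M : Matrix (Perm (Fin n)) (Perm (Fin n)) ℚ) :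
    conjMap n (c • M) = c • conjMap n M := by
  ext u v
  rfl

lemma longest_mul_mul (x : Perm (Fin n)) : longest n * (longest n * x) = x := by
  rw [← mul_assoc, longest_mul_self, one_mul]

lemma longest_conj_sg (a : ℕ) (ha : a < n - 1) :
    longest n * sg n a * longest n = sg n (n - 2 - a) := by
  have ha2 : n - 2 - a < n - 1 := by omega
  have hinv : (longest n)⁻¹ = longest n :=
    inv_eq_of_mul_eq_one_right longest_mul_self
  rw [show sg n a = sgen ⟨a, ha⟩ from by simp [sg, ha],
    show sg n (n - 2 - a) = sgen ⟨n - 2 - a, ha2⟩ from by simp [sg, ha2]]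
  have key := Equiv.swap_apply_apply (longest n) (fa (⟨a, ha⟩ : Fin (n-1)))
    (fb (⟨a, ha⟩ : Fin (n-1)))
  rw [hinv] at key
  have e1 : longest n (fa (⟨a, ha⟩ : Fin (n-1))) = fb (⟨n - 2 - a, ha2⟩ : Fin (n-1)) := by
    apply Fin.ext
    show ((Fin.rev _ : Fin n) : ℕ) = _
    rw [Fin.val_rev]
    simp only [fa, fb]
    omega
  have e2 : longest n (fb (⟨a, ha⟩ : Fin (n-1))) = fa (⟨n - 2 - a, ha2⟩ : Fin (n-1)) := by
    apply Fin.ext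
    show ((Fin.rev _ : Fin n) : ℕ) = _
    rw [Fin.val_rev]
    simp only [fa, fb]
    omega
  rw [e1, e2] at key
  rw [sgen, sgen, ← key, Equiv.swap_comm]

lemma conj_E {a : ℕ} (ha : a < n - 1) :
    conjMap n (Emat n a) = Emat n (n - 2 - a) := by
  have ha2 : n - 2 - a < n - 1 := by omega
  ext u v
  show Emat n a (longest n * u * longest n) (longest n * v * longest n) = Emat n (n-2-a) u v
  have hc1 : (longest n * v * longest n = (longest n * u * longest n) * sg n a)
      ↔ (v = u * sg n (n - 2 - a)) := by
    rw [← longest_conj_sg a ha]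
    constructor
    · intro h
      have h2 := congrArg (fun z => longest n * z * longest n) h
      rw [conj_invol] at h2
      rw [h2]
      simp only [mul_assoc, longest_mul_mul, longest_mul_self, mul_one, one_mul]
    · intro h
      rw [h]
      simp only [mul_assoc, longest_mul_mul, longest_mul_self, mul_one, one_mul]
  have hc2 : (permLen (longest n * v * longest n) = permLen (longest n * u * longest n) + 1)
      ↔ (permLen v = permLen u + 1) := by
    rw [permLen_conj, permLen_conj]
  show (if _ ∧ (_ ∧ _) then (1:ℚ) else 0) = (if _ ∧ (_ ∧ _) then (1:ℚ) else 0)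
  refine if_congr ?_ rfl rfl
  constructor
  · rintro ⟨h1, h2, -⟩
    exact ⟨hc1.1 h1, hc2.1 h2, ha2⟩
  · rintro ⟨h1, h2, -⟩
    exact ⟨hc1.2 h1, hc2.2 h2, ha⟩

lemma conj_theta :
    conjMap n (∑ i ∈ Finset.range (n-1), (n-1-i) • Emat n i)
      = ∑ i ∈ Finset.range (n-1), (i+1) • Emat n i := by
  rw [conj_sum]
  rw [Finset.sum_congr rfl (fun i hi => by
    rw [conj_nsmul, conj_E (Finset.mem_range.1 hi)])]
  rw [← Finset.sum_range_reflect (fun i => (i+1) • Emat n i) (n-1)]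
  refine Finset.sum_congr rfl fun i hi => ?_
  rw [Finset.mem_range] at hi
  rw [show n - 1 - 1 - i + 1 = n - 1 - i from by omega,
    show n - 1 - 1 - i = n - 2 - i from by omega]

lemma theta_C1 : Csub n (wordG (n-1)) 1 = ∑ i ∈ Finset.range (n-1), (n-1-i) • Emat n i := by
  rw [Csub_one, theta_eq, count_swap]

lemma nabla_cast (u v : Perm (Fin n)) :
    (((nablaMat n) u v : ℕ) : ℚ) = (∑ i ∈ Finset.range (n-1), (i+1) • Emat n i) u v := by
  have hR : (∑ i ∈ Finset.range (n-1), (i+1) • Emat n i) u v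
      = ∑ i ∈ Finset.range (n-1),
          (if v = u * sg n i ∧ (permLen v = permLen u + 1 ∧ i < n-1) then ((i:ℚ)+1) else 0) := by
    rw [Matrix.sum_apply]
    refine Finset.sum_congr rfl fun i _ => ?_
    show (i+1) • (Emat n i u v) = _
    show (i+1) • (if v = u * sg n i ∧ (permLen v = permLen u + 1 ∧ i < n-1) then (1:ℚ) else 0) = _
    by_cases h : v = u * sg n i ∧ (permLen v = permLen u + 1 ∧ i < n-1)
    · rw [if_pos h, if_pos h, nsmul_eq_mul, mul_one]
      push_cast
      ring
    · rw [if_neg h, if_neg h, smul_zero]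
  rw [hR]
  show ((∑ i : Fin (n-1), if v = u * sgen i ∧ permLen v = permLen u + 1 then (i:ℕ)+1 else 0 : ℕ) : ℚ) = _
  rw [Nat.cast_sum]
  rw [Finset.sum_congr rfl (fun (i : Fin (n-1)) _ => show
      (((if v = u * sgen i ∧ permLen v = permLen u + 1 then (i:ℕ)+1 else 0 : ℕ)) : ℚ)
        = (fun a => if v = u * sg n a ∧ (permLen v = permLen u + 1 ∧ a < n-1)
            then ((a:ℚ)+1) else 0) (i : ℕ) by
    have hsg : sg n (i:ℕ) = sgen i := by simp [sg, i.isLt]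
    simp only [hsg]
    by_cases h : v = u * sgen i ∧ permLen v = permLen u + 1
    · rw [if_pos h, if_pos ⟨h.1, h.2, i.isLt⟩]
      push_cast
      ring
    · rw [if_neg h, if_neg (fun hh => h ⟨hh.1, hh.2.1⟩)]
      norm_num)]
  exact Fin.sum_univ_eq_sum_range (fun a => if v = u * sg n a ∧ (permLen v = permLen u + 1 ∧ a < n-1) then ((a:ℚ)+1) else 0) (n-1)

lemma top_entry (hn : 1 ≤ n) :
    (Csub n (wordG (n-1)) ((wordG (n-1)).length)) 1 (longest n) = 1 := by
  rw [Csub_top, prod_E_apply]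
  rw [if_pos]
  refine ⟨by rw [one_mul, prodW_eq_longest], ?_⟩
  rw [permLen_one, permLen_longest, zero_add]
  have h2 := wordG_length_two (n-1)
  have h3 : (n-1) * ((n-1)+1) = n * (n-1) := by
    have : n - 1 + 1 = n := by omega
    rw [this, Nat.mul_comm]
  omega

end NablaProof

theorem nabla_maximal_chains (n : ℕ) (hn : 2 ≤ n) :
    mNabla n 1 (longest n) = Nat.factorial (n * (n - 1) / 2) := by
  classical
  have h2 := NablaProof.wordG_length_two (n-1)
  have h3 : (n-1) * ((n-1)+1) = n * (n-1) := by
    have : n - 1 + 1 = n := by omega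
    rw [this, Nat.mul_comm]
  set N := (NablaProof.wordG (n-1)).length with hNdef
  have hNval : n * (n-1) / 2 = N := by omega
  have hLperm : permLen (longest n) = N := by
    rw [NablaProof.permLen_longest]
    omega
  have hexp : permLen (longest n) - permLen (1 : Perm (Fin n)) = N := by
    rw [NablaProof.permLen_one, hLperm, Nat.sub_zero]
  rw [mNabla, hexp, hNval]
  have hQ : (((nablaMat n ^ N) 1 (longest n) : ℕ) : ℚ) = (N.factorial : ℚ) := by
    have hmap : (((nablaMat n ^ N) 1 (longest n) : ℕ) : ℚ)
        = (((Nat.castRingHom ℚ).mapMatrix (nablaMat n)) ^ N) 1 (longest n) := by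
      rw [← map_pow]
      rw [RingHom.mapMatrix_apply, Matrix.map_apply]
      rfl
    rw [hmap]
    have hD : (Nat.castRingHom ℚ).mapMatrix (nablaMat n)
        = ∑ i ∈ Finset.range (n-1), (i+1) • NablaProof.Emat n i := by
      ext u v
      rw [RingHom.mapMatrix_apply, Matrix.map_apply]
      exact NablaProof.nabla_cast u v
    rw [hD, ← NablaProof.conj_theta, ← NablaProof.theta_C1, ← NablaProof.conj_pow]
    have hφ1 : longest n * 1 * longest n = 1 := by
      rw [mul_one, NablaProof.longest_mul_self]
    have hφL : longest n * longest n * longest n = longest n := by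
      rw [NablaProof.longest_mul_self, one_mul]
    show (NablaProof.Csub n (NablaProof.wordG (n-1)) 1 ^ N) (longest n * 1 * longest n)
        (longest n * longest n * longest n) = _
    rw [hφ1, hφL]
    rw [NablaProof.Cpow le_rfl]
    rw [Matrix.smul_apply, NablaProof.top_entry (by omega), smul_eq_mul, mul_one]
  exact_mod_cast hQ
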